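/- Fix an integer k ≥ 0. (i) The triangle map T is injective on △_k. (ii) For every (x, y) ∈ △ with y < x, the point S_k(x, y) := (1/(1 + kx + y), x/(1 + kx + y)) lies in △_k and satisfies T(S_k(x, y)) = (x, y). -/

import Mathlib

open Matrix Filter

noncomputable section

/-- The triangle `△ = {(x,y) : 1 ≥ x ≥ y > 0}`. -/
def tri : Set (ℝ × ℝ) := {p | 1 ≥ p.1 ∧ p.1 ≥ p.2 ∧ p.2 > 0}

/-- The subtriangle `△_k = {(x,y) ∈ △ : 1 − x − ky ≥ 0 > 1 − x − (k+1)y}`. -/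
def triSub (k : ℕ) : Set (ℝ × ℝ) :=
  {p | p ∈ tri ∧ 1 - p.1 - (k : ℝ) * p.2 ≥ 0 ∧ 0 > 1 - p.1 - ((k : ℝ) + 1) * p.2}

/-- The index `k` with `(x,y) ∈ △_k`, i.e. `⌊(1-x)/y⌋`. -/
def triIndex (p : ℝ × ℝ) : ℤ := ⌊(1 - p.1) / p.2⌋

/-- The triangle map `T`, sending `(α, β) ∈ △_k` to `(β/α, (1 − α − kβ)/α)`. -/
def T (p : ℝ × ℝ) : ℝ × ℝ :=
  (p.2 / p.1, (1 - p.1 - (triIndex p : ℝ) * p.2) / p.1)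

/-- The vectors `C_k` (with indices shifted by 3):
`Cvec a 0 = C₋₃ = (1,0,0)ᵀ`, `Cvec a 1 = C₋₂ = (0,1,0)ᵀ`, `Cvec a 2 = C₋₁ = (0,0,1)ᵀ`,
and `Cvec a (k+3) = C_k = C_{k-3} - C_{k-2} - a_k C_{k-1}` for `k ≥ 0`. -/
def Cvec (a : ℕ → ℕ) : ℕ → Fin 3 → ℝ
  | 0 => ![1, 0, 0]
  | 1 => ![0, 1, 0]
  | 2 => ![0, 0, 1]
  | (n + 3) => Cvec a n - Cvec a (n + 1) - (a n : ℝ) • Cvec a (n + 2)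

/-- `d_k = (1, α, β) · C_k`, with the index shifted by 3: `dvec a α β (k+3) = d_k`. -/
def dvec (a : ℕ → ℕ) (α β : ℝ) (n : ℕ) : ℝ := ![1, α, β] ⬝ᵥ Cvec a n

/-- `X_n = C_n × C_{n+1}`, with the index shifted by 2: `Xvec a (n+2) = X_n`
(`X_n` is defined for `n ≥ -2`). -/
def Xvec (a : ℕ → ℕ) (n : ℕ) : Fin 3 → ℝ :=
  crossProduct (Cvec a (n + 1)) (Cvec a (n + 2))

lemma triIndex_of_mem {k : ℕ} {p : ℝ × ℝ} (hp : p ∈ triSub k) : triIndex p = k := by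
  obtain ⟨⟨h1, h2, h3⟩, h4, h5⟩ := hp
  unfold triIndex
  rw [Int.floor_eq_iff]
  push_cast
  constructor
  · rw [le_div_iff₀ h3]; linarith
  · rw [div_lt_iff₀ h3]; linarith

lemma left_inv {k : ℕ} {p : ℝ × ℝ} (hp : p ∈ triSub k) :
    (1 / (1 + (k : ℝ) * (T p).1 + (T p).2),
      (T p).1 / (1 + (k : ℝ) * (T p).1 + (T p).2)) = p := by
  have hk := triIndex_of_mem hp
  obtain ⟨⟨h1, h2, h3⟩, h4, h5⟩ := hp
  have hα : p.1 > 0 := lt_of_lt_of_le h3 h2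
  have hα' : p.1 ≠ 0 := ne_of_gt hα
  simp only [T, hk]
  push_cast
  have key : 1 + (k : ℝ) * (p.2 / p.1) + (1 - p.1 - (k : ℝ) * p.2) / p.1 = 1 / p.1 := by
    field_simp
    ring
  rw [key]
  have : (1 : ℝ) / (1 / p.1) = p.1 := by field_simp
  rw [this]
  have : p.2 / p.1 / (1 / p.1) = p.2 := by field_simp
  rw [this]

/-- (i) The triangle map `T` is injective on `△_k`.
(ii) For every `(x, y) ∈ △` with `y < x`, the point
`S_k(x,y) = (1/(1 + kx + y), x/(1 + kx + y))` lies in `△_k` and `T(S_k(x,y)) = (x,y)`. -/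
theorem T_injOn_and_section (k : ℕ) :
    Set.InjOn T (triSub k) ∧
    ∀ p : ℝ × ℝ, p ∈ tri → p.2 < p.1 →
      ((1 / (1 + (k : ℝ) * p.1 + p.2), p.1 / (1 + (k : ℝ) * p.1 + p.2)) ∈ triSub k ∧
       T (1 / (1 + (k : ℝ) * p.1 + p.2), p.1 / (1 + (k : ℝ) * p.1 + p.2)) = p) := by
  constructor
  · intro a ha b hb h
    rw [← left_inv ha, ← left_inv hb, h]
  · intro p hp hlt
    obtain ⟨h1, h2, h3⟩ := hp
    set D : ℝ := 1 + (k : ℝ) * p.1 + p.2 with hD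
    have hx : p.1 > 0 := lt_trans h3 hlt
    have hk0 : (0 : ℝ) ≤ (k : ℝ) * p.1 := by positivity
    have hDpos : D > 0 := by simp only [hD]; linarith
    have hDne : D ≠ 0 := ne_of_gt hDpos
    have hmem : (1 / D, p.1 / D) ∈ triSub k := by
      refine ⟨⟨?_, ?_, ?_⟩, ?_, ?_⟩
      · rw [ge_iff_le, div_le_one hDpos]; linarith
      · rw [ge_iff_le]; exact (div_le_div_iff_of_pos_right hDpos).mpr h1
      · positivity
      · have : 1 - 1 / D - (k : ℝ) * (p.1 / D) = p.2 / D := by field_simp; ring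
        rw [this]; positivity
      · have : 1 - 1 / D - ((k : ℝ) + 1) * (p.1 / D) = (p.2 - p.1) / D := by
          field_simp; ring
        rw [this]
        apply div_neg_of_neg_of_pos (by linarith) hDpos
    refine ⟨hmem, ?_⟩
    have hidx := triIndex_of_mem hmem
    simp only [T, hidx]
    push_cast
    have e1 : (p.1 / D) / (1 / D) = p.1 := by field_simp
    have e2 : (1 - 1 / D - (k : ℝ) * (p.1 / D)) / (1 / D) = p.2 := by
      field_simp; ring
    rw [e1, e2]

end
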